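/- (Uniqueness of the E-expansion, Theorem 3.2) Suppose Γ ≤ GL₂(A) contains Γ(𝔫) for some nonzero ideal 𝔫 ⊆ A. Let g₀,…,g_ℓ and h₀,…,h_ℓ be functions Ω → L such that for each 0 ≤ i ≤ ℓ, both g_i and h_i are modular of weight k−2i and type m−i for Γ (i.e. g_i |_{k−2i,m−i} γ = g_i and h_i |_{k−2i,m−i} γ = h_i for all γ ∈ Γ). If Σ_{i=0}^{ℓ} g_i·E^i = Σ_{i=0}^{ℓ} h_i·E^i pointwise on Ω, then g_i = h_i for all 0 ≤ i ≤ ℓ. Consequently every quasi-modular function of weight k, type m and depth ≤ ℓ for Γ admits a unique expression Σ_{i=0}^{ℓ} g_i E^i with g_i modular of weight k−2i and type m−i for Γ. -/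

import Mathlib

noncomputable section

namespace DrinfeldQM

variable {L : Type*} [Field L]

/-- Entry `(i,j)` of `γ ∈ GL₂(F)`, viewed inside `L`. -/
def Mc (F : Subfield L) (γ : GL (Fin 2) F) (i j : Fin 2) : L :=
  ((γ : Matrix (Fin 2) (Fin 2) F) i j : L)

/-- Determinant of `γ ∈ GL₂(F)`, viewed inside `L`. -/
def detL (F : Subfield L) (γ : GL (Fin 2) F) : L :=
  ((γ : Matrix (Fin 2) (Fin 2) F).det : L)

/-- Automorphy factor `cz + d`. -/
def jf (F : Subfield L) (γ : GL (Fin 2) F) (z : L) : L :=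
  Mc F γ 1 0 * z + Mc F γ 1 1

/-- Fractional linear action of `GL₂(F)` on `L` (restricting to `Ω`). -/
def act (F : Subfield L) (γ : GL (Fin 2) F) (z : L) : L :=
  (Mc F γ 0 0 * z + Mc F γ 0 1) / jf F γ z

/-- The Drinfeld upper half plane `Ω = L ∖ F`. -/
def Omega (F : Subfield L) : Set L := {z | z ∉ F}

/-- The slash operator `f |_{k,m} γ` of weight `k` and type `m`. -/
def slash (F : Subfield L) (k m : ℤ) (f : L → L) (γ : GL (Fin 2) F) : L → L :=
  fun z => detL F γ ^ m * jf F γ z ^ (-k) * f (act F γ z)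

/-- `f` is quasi-modular of weight `k`, type `m` and depth `≤ ℓ` for the set `S ⊆ GL₂(F)`
with coefficient family `fam` (only the indices `0,…,ℓ` of `fam` are relevant). -/
def IsQM (F : Subfield L) (S : Set (GL (Fin 2) F)) (k m : ℤ) (ℓ : ℕ)
    (f : L → L) (fam : ℕ → L → L) : Prop :=
  Set.EqOn (fam 0) f (Omega F) ∧
    ∀ γ ∈ S, ∀ z ∈ Omega F,
      slash F k m f γ z =
        ∑ i ∈ Finset.range (ℓ + 1), fam i z * (Mc F γ 1 0 / jf F γ z) ^ i

/-- The coefficient family of the `i`-th coefficient `f_i` of a quasi-modular function with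
coefficient family `fam`:  `(f_i)_h = ((h+i) choose i) · f_{h+i}`. -/
def shiftFam (i : ℕ) (fam : ℕ → L → L) : ℕ → L → L :=
  fun h z => ((h + i).choose i : L) * fam (h + i) z

/-- The double-slash operator `f ∥_{k,m} γ` of a quasi-modular function of depth `≤ ℓ` with
coefficient family `fam`. -/
def dslash (F : Subfield L) (k m : ℤ) (ℓ : ℕ) (fam : ℕ → L → L)
    (γ : GL (Fin 2) F) : L → L :=
  fun z => ∑ i ∈ Finset.range (ℓ + 1),
    (-(Mc F γ 1 0) / jf F γ z) ^ i * detL F γ ^ (m - (i : ℤ)) *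
      jf F γ z ^ (2 * (i : ℤ) - k) * fam i (act F γ z)

/-- The double-slash operator on polynomial-valued functions `P : Ω → L[X]`:
`(P ∥_{k,m} γ)(z, X) = (det γ)^m (cz+d)^{-k} P(γ·z, ((cz+d)²/det γ)(X - c/(cz+d)))`. -/
def pdslash (F : Subfield L) (k m : ℤ) (P : L → Polynomial L)
    (γ : GL (Fin 2) F) : L → Polynomial L :=
  fun z =>
    Polynomial.C (detL F γ ^ m * jf F γ z ^ (-k)) *
      (P (act F γ z)).comp
        (Polynomial.C (jf F γ z ^ 2 / detL F γ) *
          (Polynomial.X - Polynomial.C (Mc F γ 1 0 / jf F γ z)))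

/-- The associated polynomial `P_f(z, X) = ∑_{i=0}^{ℓ} f_i(z) Xⁱ`. -/
def assocPoly (ℓ : ℕ) (fam : ℕ → L → L) : L → Polynomial L :=
  fun z => ∑ i ∈ Finset.range (ℓ + 1), Polynomial.C (fam i z) * Polynomial.X ^ i

/-- `E` satisfies the functional equation of the false Eisenstein series (weight 2, type 1,
depth 1, coefficient family `(E, -π⁻¹)`) for all `γ ∈ S`. -/
def EFunEq (F : Subfield L) (S : Set (GL (Fin 2) F)) (π : L) (E : L → L) : Prop :=
  ∀ γ ∈ S, ∀ z ∈ Omega F,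
    E (act F γ z) =
      (detL F γ)⁻¹ * jf F γ z ^ 2 * (E z - Mc F γ 1 0 / (π * jf F γ z))

variable {Fq : Type*} [Field Fq] [Fintype Fq]

/-- The image in `L` of a polynomial `r ∈ A = Fq[T]` under `A → F ⊆ L`. -/
def iL (F : Subfield L) (ι : Polynomial Fq →+* F) (r : Polynomial Fq) : L := (ι r : L)

/-- `γ ∈ GL₂(F)` lies in `Γ₀(𝔞) ⊆ GL₂(A)`: its entries come from a matrix `M` over
`A = Fq[T]` with unit determinant whose lower-left entry lies in `𝔞`.
Taking `𝔞 = ⊤` expresses membership in `GL₂(A)`. -/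
def InGamma0 (F : Subfield L) (ι : Polynomial Fq →+* F)
    (𝔞 : Ideal (Polynomial Fq)) (γ : GL (Fin 2) F) : Prop :=
  ∃ M : Matrix (Fin 2) (Fin 2) (Polynomial Fq),
    (∀ i j, iL F ι (M i j) = Mc F γ i j) ∧ IsUnit M.det ∧ M 1 0 ∈ 𝔞

/-- `γ ∈ GL₂(F)` lies in the principal congruence subgroup `Γ(𝔫) ⊆ GL₂(A)`. -/
def InGammaN (F : Subfield L) (ι : Polynomial Fq →+* F)
    (𝔫 : Ideal (Polynomial Fq)) (γ : GL (Fin 2) F) : Prop :=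
  ∃ M : Matrix (Fin 2) (Fin 2) (Polynomial Fq),
    (∀ i j, iL F ι (M i j) = Mc F γ i j) ∧ IsUnit M.det ∧
      ∀ i j, M i j - (1 : Matrix (Fin 2) (Fin 2) (Polynomial Fq)) i j ∈ 𝔫

/-- `g` is modular of weight `w` and type `t` for `Γ₀(𝔞)`. -/
def IsModularOn (F : Subfield L) (ι : Polynomial Fq →+* F)
    (𝔞 : Ideal (Polynomial Fq)) (w t : ℤ) (g : L → L) : Prop :=
  ∀ γ : GL (Fin 2) F, InGamma0 F ι 𝔞 γ → ∀ z ∈ Omega F, slash F w t g γ z = g z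

/-- The degeneracy map `(δ_𝔭 g)(z) = g(℘ z)`. -/
def deltaP (F : Subfield L) (ι : Polynomial Fq →+* F) (℘ : Polynomial Fq)
    (g : L → L) : L → L := fun z => g (iL F ι ℘ * z)

/-- The Atkin–Lehner operator `(U_𝔭 g)(z) = ∑_{Q ∈ A, deg Q < deg ℘} g((z+Q)/℘)`,
where `Q = ∑ᵢ cᵢ Tⁱ` ranges over polynomials of degree `< deg ℘`. -/
def UP (F : Subfield L) (ι : Polynomial Fq →+* F) (℘ : Polynomial Fq)
    (g : L → L) : L → L :=
  fun z => ∑ c : Fin ℘.natDegree → Fq,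
    g ((z + iL F ι (∑ i : Fin ℘.natDegree, Polynomial.C (c i) * Polynomial.X ^ (i : ℕ))) /
      iL F ι ℘)

/-- The `𝔭`-stabilization `E_𝔭 = E - ℘·δ_𝔭E`. -/
def Ep (F : Subfield L) (ι : Polynomial Fq →+* F) (℘ : Polynomial Fq)
    (E : L → L) : L → L := fun z => E z - iL F ι ℘ * deltaP F ι ℘ E z

section BasicLemmas
variable {L : Type*} [Field L] (F : Subfield L)

lemma detL_ne_zero (γ : GL (Fin 2) F) : detL F γ ≠ 0 := by
  have h : IsUnit ((γ : Matrix (Fin 2) (Fin 2) F).det) :=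
    (Matrix.isUnit_iff_isUnit_det _).mp γ.isUnit
  simpa [detL] using h.ne_zero

lemma detL_eq (γ : GL (Fin 2) F) :
    detL F γ = Mc F γ 0 0 * Mc F γ 1 1 - Mc F γ 0 1 * Mc F γ 1 0 := by
  rw [detL, Matrix.det_fin_two]
  push_cast [Mc]
  ring

lemma jf_ne_zero (γ : GL (Fin 2) F) {z : L} (hz : z ∈ Omega F) : jf F γ z ≠ 0 := by
  intro h
  have hdet : ((γ : Matrix (Fin 2) (Fin 2) F).det) ≠ 0 :=
    ((Matrix.isUnit_iff_isUnit_det _).mp γ.isUnit).ne_zero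
  set c : F := (γ : Matrix (Fin 2) (Fin 2) F) 1 0 with hc
  set d : F := (γ : Matrix (Fin 2) (Fin 2) F) 1 1 with hd
  have h' : (c : L) * z + (d : L) = 0 := h
  by_cases h0 : c = 0
  · have hd0 : d = 0 := by
      have : (d : L) = 0 := by simpa [h0] using h'
      exact_mod_cast this
    rw [Matrix.det_fin_two] at hdet
    simp [← hc, ← hd, h0, hd0] at hdet
  · apply hz
    have hcL : (c : L) ≠ 0 := by exact_mod_cast h0
    have : z = ((-d / c : F) : L) := by
      push_cast
      field_simp
      linear_combination h'
    rw [this]; exact SetLike.coe_mem _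

lemma act_mem (γ : GL (Fin 2) F) {z : L} (hz : z ∈ Omega F) : act F γ z ∈ Omega F := by
  intro hw
  have hj := jf_ne_zero F γ hz
  set a : F := (γ : Matrix (Fin 2) (Fin 2) F) 0 0 with ha
  set b : F := (γ : Matrix (Fin 2) (Fin 2) F) 0 1 with hb
  set c : F := (γ : Matrix (Fin 2) (Fin 2) F) 1 0 with hc
  set d : F := (γ : Matrix (Fin 2) (Fin 2) F) 1 1 with hd
  set w : L := act F γ z with hwdef
  have hdet : ((γ : Matrix (Fin 2) (Fin 2) F).det) ≠ 0 :=
    ((Matrix.isUnit_iff_isUnit_det _).mp γ.isUnit).ne_zero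
  have hdet2 : a * d - b * c ≠ 0 := by
    rw [Matrix.det_fin_two] at hdet; exact hdet
  set wF : F := ⟨w, hw⟩ with hwF
  have hkey : ((a - wF * c : F) : L) * z = ((wF * d - b : F) : L) := by
    have h1 : w * jf F γ z = (a : L) * z + (b : L) := by
      rw [hwdef, act, div_mul_cancel₀ _ hj]; rfl
    have h2 : jf F γ z = (c : L) * z + (d : L) := rfl
    push_cast
    linear_combination w * h2 - h1
  by_cases h1 : a - wF * c = 0
  · have h2 : wF * d - b = 0 := by
      have : ((wF * d - b : F) : L) = 0 := by
        rw [← hkey, h1]; push_cast; ring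
      exact_mod_cast this
    apply hdet2
    have ha' : a = wF * c := by linear_combination h1
    have hb' : b = wF * d := by linear_combination -h2
    rw [ha', hb']; ring
  · apply hz
    have h1L : ((a - wF * c : F) : L) ≠ 0 := by exact_mod_cast h1
    have : z = (((wF * d - b) / (a - wF * c) : F) : L) := by
      push_cast
      push_cast at hkey h1L
      field_simp
      linear_combination hkey
    rw [this]; exact SetLike.coe_mem _

lemma Mc_mul (γ γ' : GL (Fin 2) F) (i j : Fin 2) :
    Mc F (γ * γ') i j = Mc F γ i 0 * Mc F γ' 0 j + Mc F γ i 1 * Mc F γ' 1 j := by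
  show (((γ * γ' : GL (Fin 2) F) : Matrix (Fin 2) (Fin 2) F) i j : L) = _
  rw [Units.val_mul, Matrix.mul_apply, Fin.sum_univ_two]
  push_cast [Mc]
  ring

lemma detL_mul (γ γ' : GL (Fin 2) F) : detL F (γ * γ') = detL F γ * detL F γ' := by
  show (((γ * γ' : GL (Fin 2) F) : Matrix (Fin 2) (Fin 2) F).det : L) = _
  rw [Units.val_mul, Matrix.det_mul]
  push_cast [detL]
  ring

lemma jf_mul (γ γ' : GL (Fin 2) F) {z : L} (hz : z ∈ Omega F) :
    jf F (γ * γ') z = jf F γ (act F γ' z) * jf F γ' z := by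
  have hj' := jf_ne_zero F γ' hz
  simp only [jf, act, Mc_mul] at *
  field_simp
  ring

lemma act_mul (γ γ' : GL (Fin 2) F) {z : L} (hz : z ∈ Omega F) :
    act F (γ * γ') z = act F γ (act F γ' z) := by
  have hj' := jf_ne_zero F γ' hz
  have hjj := jf_ne_zero F (γ * γ') hz
  have hjw := jf_ne_zero F γ (act_mem F γ' hz)
  rw [jf_mul F γ γ' hz] at hjj
  simp only [jf, act, Mc_mul] at *
  field_simp
  ring

lemma slash_comp (k m : ℤ) (f : L → L) (γ γ' : GL (Fin 2) F) {z : L} (hz : z ∈ Omega F) :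
    slash F k m f (γ * γ') z
      = detL F γ' ^ m * jf F γ' z ^ (-k) * slash F k m f γ (act F γ' z) := by
  simp only [slash, detL_mul, jf_mul F γ γ' hz, act_mul F γ γ' hz, mul_zpow]
  ring

/-- Lower-triangular unipotent element of `GL₂(F)`. -/
def uni (F : Subfield L) (x : F) : GL (Fin 2) F :=
  Matrix.GeneralLinearGroup.mkOfDetNeZero !![1, 0; x, 1]
    (by simp [Matrix.det_fin_two])

lemma uni_val (x : F) :
    ((uni F x : GL (Fin 2) F) : Matrix (Fin 2) (Fin 2) F) = !![1, 0; x, 1] := rfl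

lemma Mc_uni_00 (x : F) : Mc F (uni F x) 0 0 = 1 := by simp [Mc, uni_val]
lemma Mc_uni_01 (x : F) : Mc F (uni F x) 0 1 = 0 := by simp [Mc, uni_val]
lemma Mc_uni_10 (x : F) : Mc F (uni F x) 1 0 = (x : L) := by simp [Mc, uni_val]
lemma Mc_uni_11 (x : F) : Mc F (uni F x) 1 1 = 1 := by simp [Mc, uni_val]

lemma detL_uni (x : F) : detL F (uni F x) = 1 := by
  simp [detL, uni_val, Matrix.det_fin_two_of]

lemma denom_ne {w : L} (hw : w ∈ Omega F) (x : F) : (x : L) * w + 1 ≠ 0 := by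
  intro hcon
  by_cases h0 : x = 0
  · rw [h0] at hcon; simp at hcon
  · apply hw
    have hxL : (x : L) ≠ 0 := by exact_mod_cast h0
    have : w = ((-x⁻¹ : F) : L) := by
      push_cast
      field_simp
      linear_combination hcon
    rw [this]; exact SetLike.coe_mem _

lemma frac_inj {w : L} (hw : w ∈ Omega F) {x y : F}
    (h : (x : L) / ((x : L) * w + 1) = (y : L) / ((y : L) * w + 1)) : x = y := by
  have hx := denom_ne F hw x
  have hy := denom_ne F hw y
  rw [div_eq_div_iff hx hy] at h
  have : (x : L) = (y : L) := by linear_combination h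
  exact_mod_cast this

lemma coeff_sum_C_X (a : ℕ → L) {i0 ℓ : ℕ} (hi0 : i0 ≤ ℓ) :
    (∑ i ∈ Finset.range (ℓ + 1), Polynomial.C (a i) * Polynomial.X ^ i).coeff i0 = a i0 := by
  rw [Polynomial.finset_sum_coeff]
  simp only [Polynomial.coeff_C_mul, Polynomial.coeff_X_pow, mul_ite, mul_one, mul_zero]
  rw [Finset.sum_ite_eq (Finset.range (ℓ + 1)) i0 a]
  simp [Nat.lt_succ_iff, hi0]

lemma Bpow (A B : L) (hB : B ≠ 0) {h i : ℕ} (hhi : h ≤ i) :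
    B ^ i * (A / B) ^ (i - h) = B ^ h * A ^ (i - h) := by
  rw [div_pow, ← pow_sub_mul_pow B hhi]
  field_simp

lemma binom_key (π A Y Ez : L) (hY : π * Y + A = π * Ez) (i : ℕ) {j ℓ : ℕ} (hj : j ≤ ℓ) :
    ∑ n ∈ Finset.range (ℓ + 1),
        (n.choose i : L) * (j.choose n : L) * π ^ n * A ^ (j - n) * Y ^ (n - i)
      = (j.choose i : L) * π ^ j * Ez ^ (j - i) := by
  by_cases hij : i ≤ j
  · have hsub : Finset.Ico i (j + 1) ⊆ Finset.range (ℓ + 1) := by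
      intro x hx
      simp only [Finset.mem_Ico] at hx
      simp only [Finset.mem_range]
      omega
    rw [← Finset.sum_subset hsub]
    · rw [Finset.sum_Ico_eq_sum_range]
      have hrange : j + 1 - i = (j - i) + 1 := by omega
      rw [hrange]
      have hstep : ∀ s ∈ Finset.range ((j - i) + 1),
          ((i + s).choose i : L) * (j.choose (i + s) : L) * π ^ (i + s) * A ^ (j - (i + s))
              * Y ^ ((i + s) - i)
            = (j.choose i : L) * π ^ i * ((π * Y) ^ s * A ^ ((j - i) - s)
                * ((j - i).choose s : L)) := by
        intro s hs
        simp only [Finset.mem_range] at hs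
        have h1 : i + s ≤ j := by omega
        have hch : (j.choose (i + s)) * ((i + s).choose i) = j.choose i * (j - i).choose s := by
          have := Nat.choose_mul (n := j) (Nat.le_add_right i s)
          simpa using this
        have hchL : ((i + s).choose i : L) * (j.choose (i + s) : L)
            = (j.choose i : L) * ((j - i).choose s : L) := by
          exact_mod_cast by
            rw [mul_comm]
            exact_mod_cast congrArg (fun t : ℕ => (t : L)) hch
        have e1 : j - (i + s) = (j - i) - s := by omega
        have e2 : (i + s) - i = s := by omega
        rw [hchL, e1, e2, pow_add, mul_pow]
        ring
      rw [Finset.sum_congr rfl hstep, ← Finset.mul_sum]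
      rw [← add_pow (π * Y) A (j - i)]
      rw [hY]
      have hji : i + (j - i) = j := by omega
      rw [mul_pow, ← mul_assoc, mul_assoc ((j.choose i : L)) (π ^ i) (π ^ (j - i)),
        ← pow_add, hji]
    · intro x hx hnx
      simp only [Finset.mem_range] at hx
      simp only [Finset.mem_Ico] at hnx
      rcases Nat.lt_or_ge x i with hxi | hxi
      · simp [Nat.choose_eq_zero_of_lt hxi]
      · have : j < x := by omega
        simp [Nat.choose_eq_zero_of_lt this]
  · have h1 : (j.choose i : L) = 0 := by
      rw [Nat.choose_eq_zero_of_lt (by omega)]; push_cast; ring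
    rw [h1]
    rw [Finset.sum_eq_zero]
    · ring
    · intro n hn
      rcases Nat.lt_or_ge n i with hni | hni
      · simp [Nat.choose_eq_zero_of_lt hni]
      · have : j < n := by omega
        simp [Nat.choose_eq_zero_of_lt this]

end BasicLemmas

section FqLemmas
variable {L : Type*} [Field L] (F : Subfield L) {Fq : Type*} [Field Fq] [Fintype Fq]

lemma poly_eq_zero_of_roots (ι : Polynomial Fq →+* F) (hι : Function.Injective ι)
    (𝔫 : Ideal (Polynomial Fq)) (h𝔫 : 𝔫 ≠ ⊥)
    {w : L} (hw : w ∈ Omega F) (e d : L) (hd : d ≠ 0)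
    (P : Polynomial L)
    (hroot : ∀ c ∈ 𝔫, P.IsRoot (e + d * (iL F ι c / (iL F ι c * w + 1)))) :
    P = 0 := by
  obtain ⟨r, hr𝔫, hr⟩ := (Submodule.ne_bot_iff 𝔫).mp h𝔫
  apply Polynomial.eq_zero_of_infinite_isRoot
  apply Set.infinite_of_injective_forall_mem
    (f := fun n : ℕ => e + d * (iL F ι (r * Polynomial.X ^ n) /
      (iL F ι (r * Polynomial.X ^ n) * w + 1)))
  · intro n n' hnn
    simp only at hnn
    have h1 : iL F ι (r * Polynomial.X ^ n) / (iL F ι (r * Polynomial.X ^ n) * w + 1)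
        = iL F ι (r * Polynomial.X ^ n') / (iL F ι (r * Polynomial.X ^ n') * w + 1) :=
      mul_left_cancel₀ hd (add_left_cancel hnn)
    have h2 : ι (r * Polynomial.X ^ n) = ι (r * Polynomial.X ^ n') := frac_inj F hw h1
    have h3 : r * Polynomial.X ^ n = r * Polynomial.X ^ n' := hι h2
    have h4 : (Polynomial.X ^ n : Polynomial Fq) = Polynomial.X ^ n' :=
      mul_left_cancel₀ hr h3
    have h5 := congrArg Polynomial.natDegree h4
    simpa using h5
  · intro n
    exact hroot _ (Ideal.mul_mem_right _ _ hr𝔫)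

lemma uni_inGammaN (ι : Polynomial Fq →+* F) (𝔫 : Ideal (Polynomial Fq))
    {c : Polynomial Fq} (hc : c ∈ 𝔫) : InGammaN F ι 𝔫 (uni F (ι c)) := by
  refine ⟨!![1, 0; c, 1], ?_, ?_, ?_⟩
  · intro i j
    fin_cases i <;> fin_cases j <;>
      simp [iL, Mc_uni_00, Mc_uni_01, Mc_uni_10, Mc_uni_11, map_one, map_zero]
  · rw [Matrix.det_fin_two_of]; simpa using isUnit_one
  · intro i j
    fin_cases i <;> fin_cases j <;>
      simp [Matrix.one_apply, hc, Ideal.zero_mem]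

/-- The key vanishing lemma: if modular forms `w i` of weights `k - 2i` satisfy
`∑ wᵢ Eⁱ = 0` on `Ω`, then all `w i` vanish on `Ω`. -/
lemma vanishing (ι : Polynomial Fq →+* F) (hι : Function.Injective ι)
    (Γ : Subgroup (GL (Fin 2) F))
    (𝔫 : Ideal (Polynomial Fq)) (h𝔫 : 𝔫 ≠ ⊥)
    (hΓ𝔫 : ∀ γ : GL (Fin 2) F, InGammaN F ι 𝔫 γ → γ ∈ Γ)
    (π : L) (hπ : π ≠ 0) (E : L → L)
    (hE : EFunEq F (Γ : Set (GL (Fin 2) F)) π E)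
    (k m : ℤ) (ℓ : ℕ) (w : ℕ → L → L)
    (hw : ∀ i ≤ ℓ, ∀ γ ∈ Γ, ∀ z ∈ Omega F,
      slash F (k - 2 * (i : ℤ)) (m - (i : ℤ)) (w i) γ z = w i z)
    (hzero : ∀ z ∈ Omega F,
      ∑ i ∈ Finset.range (ℓ + 1), w i z * E z ^ i = 0) :
    ∀ i ≤ ℓ, ∀ z ∈ Omega F, w i z = 0 := by
  intro i0 hi0 z hz
  set P : Polynomial L :=
    ∑ i ∈ Finset.range (ℓ + 1), Polynomial.C (w i z) * Polynomial.X ^ i with hPdef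
  have hP : P = 0 := by
    apply poly_eq_zero_of_roots F ι hι 𝔫 h𝔫 hz (E z) (-π⁻¹) (by simp [hπ])
    intro c hc
    have hγΓ : uni F (ι c) ∈ Γ := hΓ𝔫 _ (uni_inGammaN F ι 𝔫 hc)
    have hMc10 : Mc F (uni F (ι c)) 1 0 = iL F ι c := Mc_uni_10 F (ι c)
    have hjfγ : jf F (uni F (ι c)) z = iL F ι c * z + 1 := by
      rw [jf, hMc10, Mc_uni_11]
    have hjne : jf F (uni F (ι c)) z ≠ 0 := jf_ne_zero F _ hz
    have hjne' : iL F ι c * z + 1 ≠ 0 := by rw [← hjfγ]; exact hjne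
    have hwmem : act F (uni F (ι c)) z ∈ Omega F := act_mem F _ hz
    set s : L := iL F ι c / (iL F ι c * z + 1) with hsdef
    show P.eval (E z + (-π⁻¹) * s) = 0
    set Y : L := E z + (-π⁻¹) * s with hYdef
    have hfe := hE _ hγΓ z hz
    rw [detL_uni, inv_one, one_mul, hMc10] at hfe
    have hY' : E z - iL F ι c / (π * jf F (uni F (ι c)) z) = Y := by
      rw [hYdef, hsdef, hjfγ]
      field_simp
      ring
    rw [hY'] at hfe
    have hwact : ∀ i ≤ ℓ, w i (act F (uni F (ι c)) z)
        = jf F (uni F (ι c)) z ^ (k - 2 * (i : ℤ)) * w i z := by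
      intro i hi
      have h0 := hw i hi _ hγΓ z hz
      rw [slash, detL_uni, one_zpow, one_mul] at h0
      calc w i (act F (uni F (ι c)) z)
          = jf F (uni F (ι c)) z ^ (k - 2 * (i : ℤ))
              * (jf F (uni F (ι c)) z ^ (-(k - 2 * (i : ℤ)))
                * w i (act F (uni F (ι c)) z)) := by
            rw [← mul_assoc, ← zpow_add₀ hjne]
            simp
        _ = jf F (uni F (ι c)) z ^ (k - 2 * (i : ℤ)) * w i z := by rw [h0]
    have h0 := hzero _ hwmem
    have key : ∀ i ∈ Finset.range (ℓ + 1),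
        w i (act F (uni F (ι c)) z) * E (act F (uni F (ι c)) z) ^ i
          = jf F (uni F (ι c)) z ^ k * (w i z * Y ^ i) := by
      intro i hi
      have hi' : i ≤ ℓ := Nat.lt_succ_iff.mp (Finset.mem_range.mp hi)
      have hjp : jf F (uni F (ι c)) z ^ (k - 2 * (i : ℤ))
          * (jf F (uni F (ι c)) z ^ 2) ^ i = jf F (uni F (ι c)) z ^ k := by
        rw [← pow_mul, ← zpow_natCast (jf F (uni F (ι c)) z) (2 * i), ← zpow_add₀ hjne]
        congr 1
        push_cast
        ring
      rw [hwact i hi', hfe, mul_pow, ← hjp]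
      ring
    rw [Finset.sum_congr rfl key, ← Finset.mul_sum] at h0
    have hsum : ∑ i ∈ Finset.range (ℓ + 1), w i z * Y ^ i = 0 :=
      (mul_eq_zero.mp h0).resolve_left (zpow_ne_zero k hjne)
    rw [hPdef]
    simp only [Polynomial.eval_finset_sum, Polynomial.eval_mul, Polynomial.eval_C,
      Polynomial.eval_pow, Polynomial.eval_X]
    exact hsum
  have hco : P.coeff i0 = 0 := by rw [hP]; simp
  rw [hPdef, coeff_sum_C_X (fun i => w i z) hi0] at hco
  exact hco

end FqLemmas

section ShiftLemma
variable {L : Type*} [Field L] (F : Subfield L) {Fq : Type*} [Field Fq] [Fintype Fq]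

/-- The coefficients of a quasi-modular function transform like quasi-modular functions:
solved form of equation (3.x). -/
lemma shift_solved (ι : Polynomial Fq →+* F) (hι : Function.Injective ι)
    (Γ : Subgroup (GL (Fin 2) F))
    (𝔫 : Ideal (Polynomial Fq)) (h𝔫 : 𝔫 ≠ ⊥)
    (hΓ𝔫 : ∀ γ : GL (Fin 2) F, InGammaN F ι 𝔫 γ → γ ∈ Γ)
    (k m : ℤ) (ℓ : ℕ) (f : L → L) (fam : ℕ → L → L)
    (hQM : ∀ γ ∈ Γ, ∀ z ∈ Omega F,
      slash F k m f γ z =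
        ∑ i ∈ Finset.range (ℓ + 1), fam i z * (Mc F γ 1 0 / jf F γ z) ^ i) :
    ∀ n ≤ ℓ, ∀ γ' ∈ Γ, ∀ z ∈ Omega F,
      fam n (act F γ' z)
        = detL F γ' ^ ((n : ℤ) - m) * jf F γ' z ^ (k - 2 * (n : ℤ)) *
            ∑ j ∈ Finset.range (ℓ + 1),
              (j.choose n : L) * fam j z * (Mc F γ' 1 0 / jf F γ' z) ^ (j - n) := by
  intro n hn γ' hγ' z hz
  have hd' : detL F γ' ≠ 0 := detL_ne_zero F γ'
  have hJ : jf F γ' z ≠ 0 := jf_ne_zero F γ' hz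
  have hwΩ : act F γ' z ∈ Omega F := act_mem F γ' hz
  set J : L := jf F γ' z with hJdef
  set d' : L := detL F γ' with hd'def
  set A : L := Mc F γ' 1 0 / J with hAdef
  set B : L := d' / J ^ 2 with hBdef
  have hB : B ≠ 0 := div_ne_zero hd' (pow_ne_zero 2 hJ)
  set w : L := act F γ' z with hwdef
  set P : Polynomial L :=
    (∑ i ∈ Finset.range (ℓ + 1), Polynomial.C (fam i z)
        * (Polynomial.C B * (Polynomial.X + Polynomial.C (A / B))) ^ i)
      - ∑ i ∈ Finset.range (ℓ + 1),
          Polynomial.C (d' ^ m * J ^ (-k) * fam i w) * Polynomial.X ^ i with hPdef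
  have hP0 : P = 0 := by
    apply poly_eq_zero_of_roots F ι hι 𝔫 h𝔫 hwΩ 0 1 one_ne_zero
    intro c hc
    have hγcΓ : uni F (ι c) ∈ Γ := hΓ𝔫 _ (uni_inGammaN F ι 𝔫 hc)
    have hMc10 : Mc F (uni F (ι c)) 1 0 = iL F ι c := Mc_uni_10 F (ι c)
    have hjfw : jf F (uni F (ι c)) w = iL F ι c * w + 1 := by
      rw [jf, hMc10, Mc_uni_11]
    have hdenw : iL F ι c * w + 1 ≠ 0 := denom_ne F hwΩ (ι c)
    set s : L := iL F ι c / (iL F ι c * w + 1) with hsdef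
    show P.eval (0 + 1 * s) = 0
    rw [zero_add, one_mul, hPdef]
    simp only [Polynomial.eval_sub, Polynomial.eval_finset_sum, Polynomial.eval_mul,
      Polynomial.eval_pow, Polynomial.eval_C, Polynomial.eval_add, Polynomial.eval_X]
    rw [sub_eq_zero]
    -- goal: ∑ fam i z * (B * (s + A/B))^i = ∑ (d'^m * J^(-k) * fam i w) * s^i
    have hBs : B * (s + A / B) = A + B * s := by
      field_simp
      ring
    rw [hBs]
    -- key chain
    have h1 := hQM (uni F (ι c) * γ') (Γ.mul_mem hγcΓ hγ') z hz
    have h2 := slash_comp F k m f (uni F (ι c)) γ' hz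
    rw [← hwdef, ← hd'def, ← hJdef] at h2
    have h3 := hQM (uni F (ι c)) hγcΓ w hwΩ
    have hjmulne : jf F (uni F (ι c) * γ') z ≠ 0 := jf_ne_zero F _ hz
    have hueq : Mc F (uni F (ι c) * γ') 1 0 / jf F (uni F (ι c) * γ') z = A + B * s := by
      rw [Mc_mul, hMc10, Mc_uni_11, one_mul, jf_mul F _ γ' hz]
      rw [show act F γ' z = w from rfl, hjfw, show jf F γ' z = J from rfl]
      rw [hAdef, hBdef, hsdef]
      have hweq : w * J = Mc F γ' 0 0 * z + Mc F γ' 0 1 := by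
        rw [hwdef, hJdef]
        exact div_mul_cancel₀ _ hJ
      have hJeq : J = Mc F γ' 1 0 * z + Mc F γ' 1 1 := rfl
      have key : (iL F ι c * Mc F γ' 0 0 + Mc F γ' 1 0) * J
          = Mc F γ' 1 0 * (iL F ι c * w + 1) * J + d' * iL F ι c := by
        rw [hd'def, detL_eq F γ']
        linear_combination (-(iL F ι c * Mc F γ' 1 0)) * hweq
          + (iL F ι c * Mc F γ' 0 0) * hJeq
      have hRHS : Mc F γ' 1 0 / J + d' / J ^ 2 * (iL F ι c / (iL F ι c * w + 1))
          = (Mc F γ' 1 0 * (iL F ι c * w + 1) * J + d' * iL F ι c)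
              / ((iL F ι c * w + 1) * J ^ 2) := by
        field_simp
      rw [hRHS, ← key]
      rw [div_eq_div_iff (mul_ne_zero hdenw hJ)
        (mul_ne_zero hdenw (pow_ne_zero 2 hJ))]
      ring
    rw [hueq] at h1
    -- h3 : slash f (uni) w = ∑ fam i w * s^i
    have h3' : slash F k m f (uni F (ι c)) w
        = ∑ i ∈ Finset.range (ℓ + 1), fam i w * s ^ i := by
      rw [h3, hsdef]
      refine Finset.sum_congr rfl fun i _ => ?_
      rw [hMc10, hjfw]
    rw [h2, h3'] at h1
    rw [← h1, Finset.mul_sum]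
    refine Finset.sum_congr rfl fun i _ => ?_
    ring
  -- extract coefficient n
  have hco := congrArg (fun Q : Polynomial L => Q.coeff n) hP0
  rw [hPdef] at hco
  simp only [Polynomial.coeff_zero, Polynomial.coeff_sub] at hco
  rw [coeff_sum_C_X (fun i => d' ^ m * J ^ (-k) * fam i w) hn] at hco
  have hfirst : (∑ i ∈ Finset.range (ℓ + 1), Polynomial.C (fam i z)
        * (Polynomial.C B * (Polynomial.X + Polynomial.C (A / B))) ^ i).coeff n
      = B ^ n * ∑ j ∈ Finset.range (ℓ + 1),
          (j.choose n : L) * fam j z * A ^ (j - n) := by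
    rw [Polynomial.finset_sum_coeff, Finset.mul_sum]
    refine Finset.sum_congr rfl fun i _ => ?_
    rw [mul_pow, ← Polynomial.C_pow, Polynomial.coeff_C_mul, Polynomial.coeff_C_mul,
      Polynomial.coeff_X_add_C_pow]
    rcases le_or_gt n i with hni | hni
    · have hBp := Bpow A B hB hni
      linear_combination (fam i z * (i.choose n : L)) * hBp
    · rw [Nat.choose_eq_zero_of_lt hni]
      push_cast
      ring
  rw [hfirst] at hco
  have heq1 : B ^ n * ∑ j ∈ Finset.range (ℓ + 1),
      (j.choose n : L) * fam j z * A ^ (j - n) = d' ^ m * J ^ (-k) * fam n w :=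
    sub_eq_zero.mp hco
  have hBn : (B : L) ^ n = d' ^ (n : ℤ) * J ^ (-(2 * (n : ℤ))) := by
    have hcast : ((2 * n : ℕ) : ℤ) = 2 * (n : ℤ) := by push_cast; ring
    rw [hBdef, div_pow, ← pow_mul, div_eq_mul_inv, ← zpow_natCast d' n,
      ← zpow_natCast J (2 * n), ← zpow_neg, hcast]
  have hsolve : fam n w = d' ^ ((n : ℤ) - m) * J ^ (k - 2 * (n : ℤ)) *
      ∑ j ∈ Finset.range (ℓ + 1), (j.choose n : L) * fam j z * A ^ (j - n) := by
    have h4 : d' ^ (-m) * J ^ k * (d' ^ m * J ^ (-k)) = 1 := by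
      rw [mul_mul_mul_comm, ← zpow_add₀ hd', ← zpow_add₀ hJ]
      simp
    have h5 : fam n w = d' ^ (-m) * J ^ k * (d' ^ m * J ^ (-k) * fam n w) := by
      rw [← mul_assoc, h4, one_mul]
    rw [h5, ← heq1, hBn]
    have h6 : d' ^ (-m) * J ^ k * (d' ^ (n : ℤ) * J ^ (-(2 * (n : ℤ))))
        = d' ^ ((n : ℤ) - m) * J ^ (k - 2 * (n : ℤ)) := by
      rw [mul_mul_mul_comm, ← zpow_add₀ hd', ← zpow_add₀ hJ,
        show -m + (n : ℤ) = (n : ℤ) - m from by ring,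
        show k + -(2 * (n : ℤ)) = k - 2 * (n : ℤ) from by ring]
    linear_combination (∑ j ∈ Finset.range (ℓ + 1),
      (j.choose n : L) * fam j z * A ^ (j - n)) * h6
  exact hsolve

end ShiftLemma

/-- Uniqueness of the E-expansion (Theorem 3.2), together with existence and uniqueness
of the E-expansion of every quasi-modular function. -/
theorem E_expansion_unique
    {L : Type*} [Field L] {Fq : Type*} [Field Fq] [Fintype Fq]
    (F : Subfield L) (ι : Polynomial Fq →+* F) (hι : Function.Injective ι)
    (Γ : Subgroup (GL (Fin 2) F))
    (hΓA : ∀ γ ∈ Γ, InGamma0 F ι ⊤ γ)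
    (𝔫 : Ideal (Polynomial Fq)) (h𝔫 : 𝔫 ≠ ⊥)
    (hΓ𝔫 : ∀ γ : GL (Fin 2) F, InGammaN F ι 𝔫 γ → γ ∈ Γ)
    (π : L) (hπ : π ≠ 0) (E : L → L)
    (hE : EFunEq F (Γ : Set (GL (Fin 2) F)) π E)
    (k m : ℤ) (ℓ : ℕ) (g h : ℕ → L → L)
    (hg : ∀ i ≤ ℓ, ∀ γ ∈ Γ, ∀ z ∈ Omega F,
      slash F (k - 2 * (i : ℤ)) (m - (i : ℤ)) (g i) γ z = g i z)
    (hh : ∀ i ≤ ℓ, ∀ γ ∈ Γ, ∀ z ∈ Omega F,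
      slash F (k - 2 * (i : ℤ)) (m - (i : ℤ)) (h i) γ z = h i z)
    (heq : ∀ z ∈ Omega F,
      ∑ i ∈ Finset.range (ℓ + 1), g i z * E z ^ i =
        ∑ i ∈ Finset.range (ℓ + 1), h i z * E z ^ i) :
    (∀ i ≤ ℓ, Set.EqOn (g i) (h i) (Omega F)) ∧
      ∀ (f : L → L) (fam : ℕ → L → L),
        IsQM F (Γ : Set (GL (Fin 2) F)) k m ℓ f fam →
        ∃ u : ℕ → L → L,
          (∀ i ≤ ℓ, ∀ γ ∈ Γ, ∀ z ∈ Omega F,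
            slash F (k - 2 * (i : ℤ)) (m - (i : ℤ)) (u i) γ z = u i z) ∧
          (∀ z ∈ Omega F, f z = ∑ i ∈ Finset.range (ℓ + 1), u i z * E z ^ i) ∧
          ∀ v : ℕ → L → L,
            (∀ i ≤ ℓ, ∀ γ ∈ Γ, ∀ z ∈ Omega F,
              slash F (k - 2 * (i : ℤ)) (m - (i : ℤ)) (v i) γ z = v i z) →
            (∀ z ∈ Omega F, f z = ∑ i ∈ Finset.range (ℓ + 1), v i z * E z ^ i) →
            ∀ i ≤ ℓ, Set.EqOn (v i) (u i) (Omega F) := by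
  classical
  have uniq : ∀ g₁ h₁ : ℕ → L → L,
      (∀ i ≤ ℓ, ∀ γ ∈ Γ, ∀ z ∈ Omega F,
        slash F (k - 2 * (i : ℤ)) (m - (i : ℤ)) (g₁ i) γ z = g₁ i z) →
      (∀ i ≤ ℓ, ∀ γ ∈ Γ, ∀ z ∈ Omega F,
        slash F (k - 2 * (i : ℤ)) (m - (i : ℤ)) (h₁ i) γ z = h₁ i z) →
      (∀ z ∈ Omega F,
        ∑ i ∈ Finset.range (ℓ + 1), g₁ i z * E z ^ i
          = ∑ i ∈ Finset.range (ℓ + 1), h₁ i z * E z ^ i) →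
      ∀ i ≤ ℓ, Set.EqOn (g₁ i) (h₁ i) (Omega F) := by
    intro g₁ h₁ hg₁ hh₁ hsum i hi z hz
    have hvan := vanishing F ι hι Γ 𝔫 h𝔫 hΓ𝔫 π hπ E hE k m ℓ
      (fun i z => g₁ i z - h₁ i z)
      (by
        intro i hi γ hγ z hz
        have h1 := hg₁ i hi γ hγ z hz
        have h2 := hh₁ i hi γ hγ z hz
        calc slash F (k - 2 * (i : ℤ)) (m - (i : ℤ)) (fun z => g₁ i z - h₁ i z) γ z
            = slash F (k - 2 * (i : ℤ)) (m - (i : ℤ)) (g₁ i) γ z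
              - slash F (k - 2 * (i : ℤ)) (m - (i : ℤ)) (h₁ i) γ z := by
              simp only [slash]; ring
          _ = g₁ i z - h₁ i z := by rw [h1, h2])
      (by
        intro z hz
        simp only [sub_mul]
        rw [Finset.sum_sub_distrib, hsum z hz, sub_self])
      i hi z hz
    exact sub_eq_zero.mp hvan
  constructor
  · exact fun i hi => uniq g h hg hh heq i hi
  intro f fam hQMf
  obtain ⟨hfam0, hfameq⟩ := hQMf
  have hshift := shift_solved F ι hι Γ 𝔫 h𝔫 hΓ𝔫 k m ℓ f fam hfameq
  set u : ℕ → L → L := fun i z =>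
    (-1 : L) ^ i * ∑ n ∈ Finset.range (ℓ + 1),
      (n.choose i : L) * π ^ n * fam n z * E z ^ (n - i) with hudef
  have huexp : ∀ z ∈ Omega F,
      f z = ∑ i ∈ Finset.range (ℓ + 1), u i z * E z ^ i := by
    intro z hz
    have hstep : ∑ i ∈ Finset.range (ℓ + 1), u i z * E z ^ i = fam 0 z := by
      rw [hudef]
      calc ∑ i ∈ Finset.range (ℓ + 1), ((-1 : L) ^ i * ∑ n ∈ Finset.range (ℓ + 1),
              (n.choose i : L) * π ^ n * fam n z * E z ^ (n - i)) * E z ^ i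
          = ∑ i ∈ Finset.range (ℓ + 1), ∑ n ∈ Finset.range (ℓ + 1),
              (-1 : L) ^ i * ((n.choose i : L) * π ^ n * fam n z * E z ^ (n - i)) * E z ^ i := by
            refine Finset.sum_congr rfl fun i _ => ?_
            rw [Finset.mul_sum, Finset.sum_mul]
        _ = ∑ n ∈ Finset.range (ℓ + 1), ∑ i ∈ Finset.range (ℓ + 1),
              (-1 : L) ^ i * ((n.choose i : L) * π ^ n * fam n z * E z ^ (n - i)) * E z ^ i :=
            Finset.sum_comm
        _ = ∑ n ∈ Finset.range (ℓ + 1), (if n = 0 then fam 0 z else 0) := by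
            refine Finset.sum_congr rfl fun n hn => ?_
            have hsub : Finset.range (n + 1) ⊆ Finset.range (ℓ + 1) := by
              apply Finset.range_subset_range.mpr
              have := Finset.mem_range.mp hn
              omega
            rw [← Finset.sum_subset hsub (by
              intro x hx hnx
              have hx1 := Finset.mem_range.mp hx
              have hx2 : n < x := by
                rcases Nat.lt_or_ge x (n + 1) with h' | h'
                · exact absurd (Finset.mem_range.mpr h') hnx
                · omega
              simp [Nat.choose_eq_zero_of_lt hx2])]
            have hterm : ∀ i ∈ Finset.range (n + 1),
                (-1 : L) ^ i * ((n.choose i : L) * π ^ n * fam n z * E z ^ (n - i)) * E z ^ i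
                  = ((-1 : L) ^ i * (n.choose i : L)) * (π ^ n * fam n z * E z ^ n) := by
              intro i hi
              have hin : i ≤ n := Nat.lt_succ_iff.mp (Finset.mem_range.mp hi)
              rw [show (-1 : L) ^ i * ((n.choose i : L) * π ^ n * fam n z * E z ^ (n - i)) * E z ^ i
                  = ((-1 : L) ^ i * (n.choose i : L)) * (π ^ n * fam n z * (E z ^ (n - i) * E z ^ i))
                  from by ring, pow_sub_mul_pow (E z) hin]
            rw [Finset.sum_congr rfl hterm, ← Finset.sum_mul]
            have halt : (∑ i ∈ Finset.range (n + 1), (-1 : L) ^ i * (n.choose i : L))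
                = if n = 0 then 1 else 0 := by
              have hZ := Int.alternating_sum_range_choose (n := n)
              have : ((∑ i ∈ Finset.range (n + 1), (-1 : ℤ) ^ i * (n.choose i : ℤ) : ℤ) : L)
                  = ((if n = 0 then 1 else 0 : ℤ) : L) := by rw [hZ]
              push_cast at this
              exact this
            rw [halt]
            split_ifs with hn0
            · subst hn0; simp
            · simp
        _ = fam 0 z := by
            rw [Finset.sum_ite_eq' (Finset.range (ℓ + 1)) 0 (fun _ => fam 0 z)]
            simp
    rw [hstep]
    exact (hfam0 hz).symm
  have humod : ∀ i ≤ ℓ, ∀ γ' ∈ Γ, ∀ z ∈ Omega F,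
      slash F (k - 2 * (i : ℤ)) (m - (i : ℤ)) (u i) γ' z = u i z := by
    intro i hi γ' hγ' z hz
    have hd' : detL F γ' ≠ 0 := detL_ne_zero F γ'
    have hJ : jf F γ' z ≠ 0 := jf_ne_zero F γ' hz
    have hwΩ : act F γ' z ∈ Omega F := act_mem F γ' hz
    have hfe := hE γ' hγ' z hz
    set J : L := jf F γ' z with hJdef
    set d' : L := detL F γ' with hd'def
    set A : L := Mc F γ' 1 0 / J with hAdef
    set w : L := act F γ' z with hwdef
    set Y : L := E z - Mc F γ' 1 0 / (π * J) with hYdef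
    have hYkey : π * Y + A = π * E z := by
      rw [hYdef, hAdef]
      field_simp
      ring
    have hsh : ∀ n ≤ ℓ, fam n w
        = d' ^ ((n : ℤ) - m) * J ^ (k - 2 * (n : ℤ)) *
            ∑ j ∈ Finset.range (ℓ + 1), (j.choose n : L) * fam j z * A ^ (j - n) := by
      intro n hn
      have := hshift n hn γ' hγ' z hz
      rw [← hJdef, ← hd'def, ← hAdef, ← hwdef] at this
      exact this
    have hterm : ∀ n ∈ Finset.range (ℓ + 1),
        d' ^ (m - (i : ℤ)) * J ^ (-(k - 2 * (i : ℤ))) *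
            ((-1 : L) ^ i * ((n.choose i : L) * π ^ n * fam n w * E w ^ (n - i)))
          = (-1 : L) ^ i * ((n.choose i : L) * π ^ n *
              (∑ j ∈ Finset.range (ℓ + 1), (j.choose n : L) * fam j z * A ^ (j - n))
                * Y ^ (n - i)) := by
      intro n hn
      have hnl : n ≤ ℓ := Nat.lt_succ_iff.mp (Finset.mem_range.mp hn)
      rcases le_or_gt i n with hin | hin
      · rw [hsh n hnl, hfe]
        have hEpow : (d'⁻¹ * J ^ 2 * Y) ^ (n - i)
            = d' ^ (-((n : ℤ) - (i : ℤ))) * J ^ (2 * ((n : ℤ) - (i : ℤ))) * Y ^ (n - i) := by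
          rw [mul_pow, mul_pow, inv_pow, ← zpow_natCast d' (n - i), ← zpow_neg,
            ← pow_mul, ← zpow_natCast J (2 * (n - i))]
          congr 2
          · congr 1
            push_cast [Nat.cast_sub hin]
            ring
          · congr 1
            push_cast [Nat.cast_sub hin]
            ring
        rw [hEpow]
        have hcol : d' ^ (m - (i : ℤ)) * J ^ (-(k - 2 * (i : ℤ)))
            * (d' ^ ((n : ℤ) - m) * J ^ (k - 2 * (n : ℤ)))
            * (d' ^ (-((n : ℤ) - (i : ℤ))) * J ^ (2 * ((n : ℤ) - (i : ℤ)))) = 1 := by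
          rw [mul_mul_mul_comm (d' ^ (m - (i : ℤ))), mul_mul_mul_comm,
            ← zpow_add₀ hd', ← zpow_add₀ hJ, ← zpow_add₀ hd', ← zpow_add₀ hJ,
            show m - (i : ℤ) + ((n : ℤ) - m) + -((n : ℤ) - (i : ℤ)) = 0 from by ring,
            show -(k - 2 * (i : ℤ)) + (k - 2 * (n : ℤ)) + 2 * ((n : ℤ) - (i : ℤ)) = 0
              from by ring]
          simp
        linear_combination ((-1 : L) ^ i * ((n.choose i : L) * π ^ n *
          (∑ j ∈ Finset.range (ℓ + 1), (j.choose n : L) * fam j z * A ^ (j - n))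
            * Y ^ (n - i))) * hcol
      · rw [Nat.choose_eq_zero_of_lt hin]
        push_cast
        ring
    show d' ^ (m - (i : ℤ)) * J ^ (-(k - 2 * (i : ℤ))) *
        ((-1 : L) ^ i * ∑ n ∈ Finset.range (ℓ + 1),
          (n.choose i : L) * π ^ n * fam n w * E w ^ (n - i))
      = (-1 : L) ^ i * ∑ n ∈ Finset.range (ℓ + 1),
          (n.choose i : L) * π ^ n * fam n z * E z ^ (n - i)
    calc d' ^ (m - (i : ℤ)) * J ^ (-(k - 2 * (i : ℤ))) *
        ((-1 : L) ^ i * ∑ n ∈ Finset.range (ℓ + 1),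
          (n.choose i : L) * π ^ n * fam n w * E w ^ (n - i))
        = ∑ n ∈ Finset.range (ℓ + 1), d' ^ (m - (i : ℤ)) * J ^ (-(k - 2 * (i : ℤ))) *
            ((-1 : L) ^ i * ((n.choose i : L) * π ^ n * fam n w * E w ^ (n - i))) := by
          simp only [Finset.mul_sum]
      _ = ∑ n ∈ Finset.range (ℓ + 1), (-1 : L) ^ i * ((n.choose i : L) * π ^ n *
            (∑ j ∈ Finset.range (ℓ + 1), (j.choose n : L) * fam j z * A ^ (j - n))
              * Y ^ (n - i)) := Finset.sum_congr rfl hterm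
      _ = ∑ n ∈ Finset.range (ℓ + 1), ∑ j ∈ Finset.range (ℓ + 1),
            ((-1 : L) ^ i * ((n.choose i : L) * π ^ n))
              * ((j.choose n : L) * fam j z * A ^ (j - n)) * Y ^ (n - i) := by
          refine Finset.sum_congr rfl fun n _ => ?_
          rw [show (-1 : L) ^ i * ((n.choose i : L) * π ^ n *
              (∑ j ∈ Finset.range (ℓ + 1), (j.choose n : L) * fam j z * A ^ (j - n))
                * Y ^ (n - i))
            = ((-1 : L) ^ i * ((n.choose i : L) * π ^ n))
                * (∑ j ∈ Finset.range (ℓ + 1), (j.choose n : L) * fam j z * A ^ (j - n))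
                * Y ^ (n - i) from by ring, Finset.mul_sum, Finset.sum_mul]
      _ = ∑ j ∈ Finset.range (ℓ + 1), ∑ n ∈ Finset.range (ℓ + 1),
            ((-1 : L) ^ i * ((n.choose i : L) * π ^ n))
              * ((j.choose n : L) * fam j z * A ^ (j - n)) * Y ^ (n - i) :=
          Finset.sum_comm
      _ = ∑ j ∈ Finset.range (ℓ + 1),
            (-1 : L) ^ i * ((j.choose i : L) * π ^ j * fam j z * E z ^ (j - i)) := by
          refine Finset.sum_congr rfl fun j hj => ?_
          have hjl : j ≤ ℓ := Nat.lt_succ_iff.mp (Finset.mem_range.mp hj)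
          have hb := binom_key π A Y (E z) hYkey i hjl
          calc ∑ n ∈ Finset.range (ℓ + 1),
              ((-1 : L) ^ i * ((n.choose i : L) * π ^ n))
                * ((j.choose n : L) * fam j z * A ^ (j - n)) * Y ^ (n - i)
              = ((-1 : L) ^ i * fam j z) * ∑ n ∈ Finset.range (ℓ + 1),
                  (n.choose i : L) * (j.choose n : L) * π ^ n * A ^ (j - n) * Y ^ (n - i) := by
                rw [Finset.mul_sum]
                exact Finset.sum_congr rfl fun n _ => by ring
            _ = ((-1 : L) ^ i * fam j z)
                  * ((j.choose i : L) * π ^ j * E z ^ (j - i)) := by rw [hb]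
            _ = (-1 : L) ^ i * ((j.choose i : L) * π ^ j * fam j z * E z ^ (j - i)) := by
                ring
      _ = (-1 : L) ^ i * ∑ n ∈ Finset.range (ℓ + 1),
            (n.choose i : L) * π ^ n * fam n z * E z ^ (n - i) := by
          rw [Finset.mul_sum]
  refine ⟨u, humod, huexp, fun v hv hvexp i hi =>
    uniq v u hv humod (fun z hz => (hvexp z hz).symm.trans (huexp z hz)) i hi⟩


end DrinfeldQM
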